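/- For ξ > 1, there exists a unique x₀ > 0 such that ξ * Real.tanh x₀ = x₀. Moreover ξ * tanh x > x for all x in (0, x₀) and ξ * tanh x < x for all x > x₀. -/

import Mathlib

open Real Set

private lemma my_hasDerivAt_tanh (x : ℝ) :
    HasDerivAt Real.tanh (1 / Real.cosh x ^ 2) x := by
  have h := (Real.hasDerivAt_sinh x).div (Real.hasDerivAt_cosh x) (Real.cosh_pos x).ne'
  have heq : (fun y => Real.sinh y / Real.cosh y) = Real.tanh := by
    funext y; rw [Real.tanh_eq_sinh_div_cosh]
  rw [show (Real.sinh / Real.cosh) = fun y => Real.sinh y / Real.cosh y from rfl, heq] at h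
  refine h.congr_deriv ?_
  have := Real.cosh_sq_sub_sinh_sq x
  field_simp
  nlinarith [Real.cosh_pos x]

private lemma my_tanh_lt_one (x : ℝ) : Real.tanh x < 1 := by
  rw [Real.tanh_eq_sinh_div_cosh, div_lt_one (Real.cosh_pos x)]
  have : Real.cosh x - Real.sinh x = Real.exp (-x) := by
    rw [Real.cosh_eq, Real.sinh_eq]; ring
  nlinarith [Real.exp_pos (-x)]

private lemma my_g_anti : StrictAntiOn (fun x => Real.tanh x / x) (Set.Ioi (0:ℝ)) := by
  have hderiv : ∀ x ∈ Set.Ioi (0:ℝ), HasDerivAt (fun x => Real.tanh x / x)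
      ((1 / Real.cosh x ^ 2 * x - Real.tanh x) / x ^ 2) x := by
    intro x hx
    simpa [Pi.div_def] using (my_hasDerivAt_tanh x).div (hasDerivAt_id x) (ne_of_gt hx)
  apply strictAntiOn_of_deriv_neg (convex_Ioi 0)
  · exact fun x hx => ((hderiv x hx).continuousAt).continuousWithinAt
  · intro x hx
    rw [interior_Ioi] at hx
    rw [(hderiv x hx).deriv]
    apply div_neg_of_neg_of_pos _ (pow_pos hx 2)
    have hc := Real.cosh_pos x
    have hs : x < Real.sinh x := Real.self_lt_sinh_iff.mpr hx
    have hc1 : 1 ≤ Real.cosh x := Real.one_le_cosh x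
    have h1 : 1 / Real.cosh x ^ 2 * x = x / Real.cosh x ^ 2 := by ring
    rw [sub_neg, Real.tanh_eq_sinh_div_cosh, h1,
      div_lt_div_iff₀ (by positivity) hc]
    nlinarith [mul_lt_mul_of_pos_right hs hc, mul_pos (hx.trans hs) hc]

theorem tanh_fixed_point (ξ : ℝ) (hξ : 1 < ξ) :
    ∃ x₀ : ℝ, 0 < x₀ ∧ ξ * Real.tanh x₀ = x₀ ∧
      (∀ y : ℝ, 0 < y → ξ * Real.tanh y = y → y = x₀) ∧
      (∀ x : ℝ, 0 < x → x < x₀ → x < ξ * Real.tanh x) ∧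
      (∀ x : ℝ, x₀ < x → ξ * Real.tanh x < x) := by
  have hξ0 : (0:ℝ) < ξ := by linarith
  set g : ℝ → ℝ := fun x => Real.tanh x / x with hg
  -- find a > 0 with g a > 1/ξ
  have hslope : Filter.Tendsto g (nhdsWithin 0 {(0:ℝ)}ᶜ) (nhds 1) := by
    have h := my_hasDerivAt_tanh 0
    rw [hasDerivAt_iff_tendsto_slope] at h
    simp only [Real.cosh_zero, one_pow, div_one] at h
    refine h.congr fun x => ?_
    simp [slope, Real.tanh_zero, g, div_eq_inv_mul]
  have hev : ∀ᶠ x in nhdsWithin 0 {(0:ℝ)}ᶜ, 1/ξ < g x :=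
    hslope.eventually (eventually_gt_nhds (by rw [div_lt_one hξ0]; exact hξ))
  have hev' : ∀ᶠ x in nhdsWithin 0 (Set.Ioi 0), 1/ξ < g x :=
    hev.filter_mono (nhdsWithin_mono 0 fun x hx => ne_of_gt hx)
  obtain ⟨a, hga, ha0⟩ := (hev'.and self_mem_nhdsWithin).exists
  have ha : (0:ℝ) < a := ha0
  -- g ξ < 1/ξ
  have hgξ : g ξ < 1/ξ := by
    have := my_tanh_lt_one ξ
    exact (div_lt_div_iff_of_pos_right hξ0).mpr this
  have haξ : a < ξ :=
    (my_g_anti.lt_iff_gt (Set.mem_Ioi.mpr hξ0) ha0).mp (hgξ.trans hga)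
  have hcont : ContinuousOn g (Set.Icc a ξ) := by
    intro x hx
    have hx0 : (0:ℝ) < x := lt_of_lt_of_le ha hx.1
    have hd : HasDerivAt g ((1 / Real.cosh x ^ 2 * x - Real.tanh x) / x ^ 2) x := by
      simpa [Pi.div_def] using (my_hasDerivAt_tanh x).div (hasDerivAt_id x) (ne_of_gt hx0)
    exact hd.continuousAt.continuousWithinAt
  obtain ⟨x₀, hx₀mem, hgx₀⟩ := intermediate_value_Icc' (le_of_lt haξ) hcont
    (Set.mem_Icc.mpr ⟨le_of_lt hgξ, le_of_lt hga⟩)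
  have hx₀pos : (0:ℝ) < x₀ := lt_of_lt_of_le ha hx₀mem.1
  have hgx₀' : Real.tanh x₀ / x₀ = 1/ξ := hgx₀
  have hfix : ξ * Real.tanh x₀ = x₀ := by
    rw [div_eq_div_iff (ne_of_gt hx₀pos) (ne_of_gt hξ0)] at hgx₀'
    linarith [hgx₀']
  have hgx₀'' : Real.tanh x₀ / x₀ = 1/ξ := hgx₀
  refine ⟨x₀, hx₀pos, hfix, ?_, ?_, ?_⟩
  · intro y hy hyfix
    have hgy : Real.tanh y / y = 1/ξ := by
      rw [div_eq_div_iff (ne_of_gt hy) (ne_of_gt hξ0)]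
      linarith [hyfix, mul_comm (Real.tanh y) ξ, mul_comm ξ (Real.tanh y)]
    exact my_g_anti.injOn (Set.mem_Ioi.mpr hy) (Set.mem_Ioi.mpr hx₀pos)
      (hgy.trans hgx₀''.symm)
  · intro x hx0 hxlt
    have h1 : Real.tanh x₀ / x₀ < Real.tanh x / x :=
      my_g_anti (Set.mem_Ioi.mpr hx0) (Set.mem_Ioi.mpr hx₀pos) hxlt
    rw [hgx₀''] at h1
    rw [div_lt_div_iff₀ hξ0 hx0] at h1
    nlinarith [h1]
  · intro x hxgt
    have hx0 : (0:ℝ) < x := hx₀pos.trans hxgt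
    have h1 : Real.tanh x / x < Real.tanh x₀ / x₀ :=
      my_g_anti (Set.mem_Ioi.mpr hx₀pos) (Set.mem_Ioi.mpr hx0) hxgt
    rw [hgx₀''] at h1
    rw [div_lt_div_iff₀ hx0 hξ0] at h1
    nlinarith [h1]
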